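/- Product of block-encoded unitaries with subnormalization 1: if U is a (1, a, delta)-block-encoding of an s-qubit unitary A and V is a (1, a, epsilon)-block-encoding of an s-qubit unitary B (using the same a ancillas), then UV is a (1, a, delta + epsilon + 2*sqrt(delta*epsilon))-block-encoding of AB. -/

import Mathlib

/-- The ℓ²-operator norm of a complex matrix (as a map on Euclidean space). -/
noncomputable def opNorm {ι : Type*} [Fintype ι] [DecidableEq ι] (M : Matrix ι ι ℂ) : ℝ :=
  ‖Matrix.toEuclideanCLM (𝕜 := ℂ) M‖

/-- The upper-left corner `(⟨0|^{⊗a} ⊗ I) U (|0⟩^{⊗a} ⊗ I)` of a unitary on ancilla × system,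
with distinguished ancilla basis state `z`. -/
noncomputable def corner {α ι : Type*} [Fintype α] [Fintype ι] [DecidableEq α] [DecidableEq ι]
    (z : α) (U : Matrix (α × ι) (α × ι) ℂ) : Matrix ι ι ℂ :=
  Matrix.of fun i j => U (z, i) (z, j)

/-- `U` is an `(a, e)`-block-encoding of `A` (with subnormalization `a` and error `e`):
`U` is unitary and `‖A - a · (⟨0| ⊗ I) U (|0⟩ ⊗ I)‖ ≤ e` in ℓ²-operator norm. -/
def IsBlockEncoding {α ι : Type*} [Fintype α] [Fintype ι] [DecidableEq α] [DecidableEq ι]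
    (z : α) (U : Matrix (α × ι) (α × ι) ℂ) (A : Matrix ι ι ℂ) (a e : ℝ) : Prop :=
  U ∈ Matrix.unitaryGroup (α × ι) ℂ ∧ opNorm (A - (a : ℂ) • corner z U) ≤ e

open Matrix
open scoped Matrix.Norms.L2Operator

section Aux

variable {α ι : Type*} [Fintype α] [Fintype ι] [DecidableEq α] [DecidableEq ι]

lemma opNorm_eq_l2 (M : Matrix ι ι ℂ) : opNorm M = ‖M‖ := rfl

/-- The isometric embedding `|z⟩ ⊗ I` as a rectangular matrix. -/
noncomputable def embedK (z : α) : Matrix (α × ι) ι ℂ :=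
  Matrix.of fun p j => if p = (z, j) then 1 else 0

lemma embedK_conjT_mul (z : α) :
    (embedK (ι := ι) z)ᴴ * embedK (ι := ι) z = (1 : Matrix ι ι ℂ) := by
  ext i j
  simp [embedK, Matrix.mul_apply, Matrix.conjTranspose_apply, Matrix.one_apply,
    apply_ite, Prod.ext_iff, Fintype.sum_prod_type, ite_and, Finset.sum_ite_eq, eq_comm]

lemma corner_eq (z : α) (M : Matrix (α × ι) (α × ι) ℂ) :
    corner z M = (embedK (ι := ι) z)ᴴ * M * embedK (ι := ι) z := by
  ext i j
  simp [corner, embedK, Matrix.mul_apply, Matrix.conjTranspose_apply,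
    apply_ite, Finset.sum_ite_eq, Finset.sum_ite_eq']

variable [Nonempty ι]

lemma l2_norm_one : ‖(1 : Matrix ι ι ℂ)‖ = 1 := by
  haveI : Nontrivial (EuclideanSpace ℂ ι) := by
    infer_instance
  rw [Matrix.cstar_norm_def, _root_.map_one]
  exact norm_one

lemma l2_norm_unitary {ι' : Type*} [Fintype ι'] [DecidableEq ι'] [Nonempty ι']
    {W : Matrix ι' ι' ℂ} (h : W ∈ Matrix.unitaryGroup ι' ℂ) : ‖W‖ = 1 := by
  have h1 : ‖Wᴴ * W‖ = ‖W‖ * ‖W‖ := Matrix.l2_opNorm_conjTranspose_mul_self W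
  rw [← Matrix.star_eq_conjTranspose, Matrix.mem_unitaryGroup_iff'.mp h, l2_norm_one] at h1
  rcases mul_self_eq_one_iff.mp h1.symm with h2 | h2
  · exact h2
  · nlinarith [norm_nonneg W]

lemma l2_norm_embedK (z : α) : ‖embedK (ι := ι) z‖ ≤ 1 := by
  have h1 : ‖(embedK (ι := ι) z)ᴴ * embedK (ι := ι) z‖ = ‖embedK (ι := ι) z‖ * ‖embedK (ι := ι) z‖ :=
    Matrix.l2_opNorm_conjTranspose_mul_self _
  rw [embedK_conjT_mul, l2_norm_one] at h1
  nlinarith [norm_nonneg (embedK (ι := ι) z)]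

end Aux

section Key

variable {α ι : Type*} [Fintype α] [Fintype ι] [DecidableEq α] [DecidableEq ι] [Nonempty ι]

set_option maxHeartbeats 1000000 in
lemma key_bound (z : α) {δ ε : ℝ} (U V : Matrix (α × ι) (α × ι) ℂ) (A B : Matrix ι ι ℂ)
    (hA : A ∈ Matrix.unitaryGroup ι ℂ) (hB : B ∈ Matrix.unitaryGroup ι ℂ)
    (hU : U ∈ Matrix.unitaryGroup (α × ι) ℂ) (hV : V ∈ Matrix.unitaryGroup (α × ι) ℂ)
    (hUd : ‖A - corner z U‖ ≤ δ) (hVe : ‖B - corner z V‖ ≤ ε) :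
    ‖A * B - corner z (U * V)‖ ≤ δ + ε + 2 * Real.sqrt (δ * ε) := by
  haveI : Nonempty (α × ι) := ⟨(z, Classical.arbitrary ι)⟩
  have hδ0 : 0 ≤ δ := le_trans (norm_nonneg _) hUd
  have hε0 : 0 ≤ ε := le_trans (norm_nonneg _) hVe
  set E : Matrix (α × ι) ι ℂ := embedK z with hEdef
  have hEE : Eᴴ * E = (1 : Matrix ι ι ℂ) := embedK_conjT_mul z
  have hE'1 : ∀ (M : Matrix ι ι ℂ), Eᴴ * (E * M) = M := by
    intro M; rw [← Matrix.mul_assoc, hEE, Matrix.one_mul]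
  have hE'2 : ∀ (M : Matrix ι (α × ι) ℂ), Eᴴ * (E * M) = M := by
    intro M; rw [← Matrix.mul_assoc, hEE, Matrix.one_mul]
  -- unitarity as rewrite rules
  have hUU1 : ∀ (M : Matrix (α × ι) ι ℂ), U * (Uᴴ * M) = M := by
    intro M
    rw [← Matrix.mul_assoc, ← Matrix.star_eq_conjTranspose,
      Matrix.mem_unitaryGroup_iff.mp hU, Matrix.one_mul]
  have hUU2 : ∀ (M : Matrix (α × ι) (α × ι) ℂ), U * (Uᴴ * M) = M := by
    intro M
    rw [← Matrix.mul_assoc, ← Matrix.star_eq_conjTranspose,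
      Matrix.mem_unitaryGroup_iff.mp hU, Matrix.one_mul]
  have hVV1 : ∀ (M : Matrix (α × ι) ι ℂ), Vᴴ * (V * M) = M := by
    intro M
    rw [← Matrix.mul_assoc, ← Matrix.star_eq_conjTranspose,
      Matrix.mem_unitaryGroup_iff'.mp hV, Matrix.one_mul]
  have hVV2 : ∀ (M : Matrix (α × ι) (α × ι) ℂ), Vᴴ * (V * M) = M := by
    intro M
    rw [← Matrix.mul_assoc, ← Matrix.star_eq_conjTranspose,
      Matrix.mem_unitaryGroup_iff'.mp hV, Matrix.one_mul]
  set Q : Matrix (α × ι) (α × ι) ℂ := E * Eᴴ with hQdef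
  set Ut : Matrix ι ι ℂ := Eᴴ * U * E with hUt
  set Vt : Matrix ι ι ℂ := Eᴴ * V * E with hVt
  set X : Matrix ι (α × ι) ℂ := Eᴴ * U * (1 - Q) with hX
  set Y : Matrix (α × ι) ι ℂ := (1 - Q) * (V * E) with hY
  have hcU : corner z U = Ut := corner_eq z U
  have hcV : corner z V = Vt := corner_eq z V
  -- norms of unitaries
  have hnA : ‖A‖ = 1 := l2_norm_unitary hA
  have hnB : ‖B‖ = 1 := l2_norm_unitary hB
  have hnU : ‖U‖ = 1 := l2_norm_unitary hU
  have hnV : ‖V‖ = 1 := l2_norm_unitary hV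
  have hnE : ‖E‖ ≤ 1 := l2_norm_embedK z
  have hnEH : ‖Eᴴ‖ ≤ 1 := by rw [Matrix.l2_opNorm_conjTranspose]; exact hnE
  have hnUt : ‖Ut‖ ≤ 1 := by
    calc ‖Eᴴ * U * E‖ ≤ ‖Eᴴ * U‖ * ‖E‖ := Matrix.l2_opNorm_mul _ _
    _ ≤ (‖Eᴴ‖ * ‖U‖) * ‖E‖ := by
        exact mul_le_mul_of_nonneg_right (Matrix.l2_opNorm_mul _ _) (norm_nonneg _)
    _ ≤ 1 := by rw [hnU]; nlinarith [norm_nonneg (Eᴴ), norm_nonneg E]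
  have hnVt : ‖Vt‖ ≤ 1 := by
    calc ‖Eᴴ * V * E‖ ≤ ‖Eᴴ * V‖ * ‖E‖ := Matrix.l2_opNorm_mul _ _
    _ ≤ (‖Eᴴ‖ * ‖V‖) * ‖E‖ := by
        exact mul_le_mul_of_nonneg_right (Matrix.l2_opNorm_mul _ _) (norm_nonneg _)
    _ ≤ 1 := by rw [hnV]; nlinarith [norm_nonneg (Eᴴ), norm_nonneg E]
  -- decomposition
  have hdecomp : A * B - corner z (U * V) = (A - Ut) * B + Ut * (B - Vt) - X * Y := by
    rw [corner_eq z (U * V), hX, hY, hUt, hVt, hQdef]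
    simp only [← hEdef, Matrix.mul_sub, Matrix.sub_mul, Matrix.mul_one, Matrix.one_mul,
      Matrix.mul_assoc, hE'1, hE'2]
    abel
  -- bound on X
  have hXXH : X * Xᴴ = 1 - Ut * Utᴴ := by
    rw [hX, hUt, hQdef]
    simp only [← hEdef, Matrix.conjTranspose_mul, Matrix.conjTranspose_sub, Matrix.conjTranspose_one,
      Matrix.conjTranspose_conjTranspose, Matrix.mul_sub, Matrix.sub_mul, Matrix.mul_one,
      Matrix.one_mul, Matrix.mul_assoc, hE'1, hE'2, hUU1, hUU2, hEE]
    abel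
  have hUid : 1 - Ut * Utᴴ = (A - Ut) * Aᴴ + Ut * (A - Ut)ᴴ := by
    have hAA : A * Aᴴ = 1 := by
      rw [← Matrix.star_eq_conjTranspose]; exact Matrix.mem_unitaryGroup_iff.mp hA
    rw [Matrix.conjTranspose_sub]
    simp only [Matrix.mul_sub, Matrix.sub_mul, hAA]
    abel
  have hnXXH : ‖X * Xᴴ‖ ≤ 2 * δ := by
    rw [hXXH, hUid]
    calc ‖(A - Ut) * Aᴴ + Ut * (A - Ut)ᴴ‖
        ≤ ‖(A - Ut) * Aᴴ‖ + ‖Ut * (A - Ut)ᴴ‖ := norm_add_le _ _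
      _ ≤ ‖A - Ut‖ * ‖Aᴴ‖ + ‖Ut‖ * ‖(A - Ut)ᴴ‖ :=
          add_le_add (Matrix.l2_opNorm_mul _ _) (Matrix.l2_opNorm_mul _ _)
      _ ≤ 2 * δ := by
          rw [Matrix.l2_opNorm_conjTranspose, Matrix.l2_opNorm_conjTranspose, hnA]
          rw [hcU] at hUd
          nlinarith [norm_nonneg (A - Ut), norm_nonneg Ut]
  have hnX : ‖X‖ ≤ Real.sqrt (2 * δ) := by
    have h1 : ‖X * Xᴴ‖ = ‖X‖ * ‖X‖ := by
      have := Matrix.l2_opNorm_conjTranspose_mul_self Xᴴ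
      rwa [Matrix.conjTranspose_conjTranspose, Matrix.l2_opNorm_conjTranspose] at this
    nlinarith [Real.sq_sqrt (by linarith : (0:ℝ) ≤ 2 * δ), Real.sqrt_nonneg (2 * δ),
      norm_nonneg X]
  -- bound on Y
  have hYHY : Yᴴ * Y = 1 - Vtᴴ * Vt := by
    rw [hY, hVt, hQdef]
    simp only [← hEdef, Matrix.conjTranspose_mul, Matrix.conjTranspose_sub, Matrix.conjTranspose_one,
      Matrix.conjTranspose_conjTranspose, Matrix.mul_sub, Matrix.sub_mul, Matrix.mul_one,
      Matrix.one_mul, Matrix.mul_assoc, hE'1, hE'2, hVV1, hVV2, hEE]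
    abel
  have hVid : 1 - Vtᴴ * Vt = (B - Vt)ᴴ * B + Vtᴴ * (B - Vt) := by
    have hBB : Bᴴ * B = 1 := by
      rw [← Matrix.star_eq_conjTranspose]; exact Matrix.mem_unitaryGroup_iff'.mp hB
    rw [Matrix.conjTranspose_sub]
    simp only [Matrix.mul_sub, Matrix.sub_mul, hBB]
    abel
  have hnYHY : ‖Yᴴ * Y‖ ≤ 2 * ε := by
    rw [hYHY, hVid]
    calc ‖(B - Vt)ᴴ * B + Vtᴴ * (B - Vt)‖
        ≤ ‖(B - Vt)ᴴ * B‖ + ‖Vtᴴ * (B - Vt)‖ := norm_add_le _ _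
      _ ≤ ‖(B - Vt)ᴴ‖ * ‖B‖ + ‖Vtᴴ‖ * ‖B - Vt‖ :=
          add_le_add (Matrix.l2_opNorm_mul _ _) (Matrix.l2_opNorm_mul _ _)
      _ ≤ 2 * ε := by
          rw [Matrix.l2_opNorm_conjTranspose, Matrix.l2_opNorm_conjTranspose, hnB]
          rw [hcV] at hVe
          nlinarith [norm_nonneg (B - Vt), norm_nonneg Vt]
  have hnY : ‖Y‖ ≤ Real.sqrt (2 * ε) := by
    have h1 : ‖Yᴴ * Y‖ = ‖Y‖ * ‖Y‖ := Matrix.l2_opNorm_conjTranspose_mul_self Y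
    nlinarith [Real.sq_sqrt (by linarith : (0:ℝ) ≤ 2 * ε), Real.sqrt_nonneg (2 * ε),
      norm_nonneg Y]
  have hXY : ‖X * Y‖ ≤ 2 * Real.sqrt (δ * ε) := by
    have h1 : ‖X * Y‖ ≤ Real.sqrt (2 * δ) * Real.sqrt (2 * ε) :=
      (Matrix.l2_opNorm_mul X Y).trans
        (mul_le_mul hnX hnY (norm_nonneg Y) (Real.sqrt_nonneg _))
    have h2 : Real.sqrt (2 * δ) * Real.sqrt (2 * ε) = 2 * Real.sqrt (δ * ε) := by
      rw [← Real.sqrt_mul (by linarith) (2 * ε)]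
      rw [show (2 * δ) * (2 * ε) = 4 * (δ * ε) by ring]
      rw [Real.sqrt_mul (by norm_num) (δ * ε), show Real.sqrt 4 = 2 by
        rw [show (4:ℝ) = 2 ^ 2 by norm_num, Real.sqrt_sq (by norm_num)]]
    linarith [h1, h2.symm.le]
  rw [hcU] at hUd; rw [hcV] at hVe
  calc ‖A * B - corner z (U * V)‖ = ‖(A - Ut) * B + Ut * (B - Vt) - X * Y‖ := by rw [hdecomp]
    _ ≤ ‖(A - Ut) * B + Ut * (B - Vt)‖ + ‖X * Y‖ := norm_sub_le _ _
    _ ≤ (‖(A - Ut) * B‖ + ‖Ut * (B - Vt)‖) + ‖X * Y‖ := by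
        exact add_le_add_left (norm_add_le _ _) _
    _ ≤ (‖A - Ut‖ * ‖B‖ + ‖Ut‖ * ‖B - Vt‖) + ‖X * Y‖ := by
        exact add_le_add_left (add_le_add (Matrix.l2_opNorm_mul _ _)
          (Matrix.l2_opNorm_mul _ _)) _
    _ ≤ δ + ε + 2 * Real.sqrt (δ * ε) := by
        rw [hnB]
        nlinarith [norm_nonneg (A - Ut), norm_nonneg (B - Vt), norm_nonneg Ut]

end Key


/-- Product of block-encoded unitaries with subnormalization 1: if `U` is a
`(1, a, δ)`-block-encoding of an `s`-qubit unitary `A` and `V` is a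
`(1, a, ε)`-block-encoding of an `s`-qubit unitary `B` (same `a` ancillas), then `U * V`
is a `(1, a, δ + ε + 2√(δε))`-block-encoding of `A * B`. -/
theorem product_of_unitary_block_encodings (a s : ℕ) (δ ε : ℝ)
    (U V : Matrix (Fin (2 ^ a) × Fin (2 ^ s)) (Fin (2 ^ a) × Fin (2 ^ s)) ℂ)
    (A B : Matrix (Fin (2 ^ s)) (Fin (2 ^ s)) ℂ)
    (hA : A ∈ Matrix.unitaryGroup (Fin (2 ^ s)) ℂ)
    (hB : B ∈ Matrix.unitaryGroup (Fin (2 ^ s)) ℂ)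
    (hU : IsBlockEncoding (0 : Fin (2 ^ a)) U A 1 δ)
    (hV : IsBlockEncoding (0 : Fin (2 ^ a)) V B 1 ε) :
    IsBlockEncoding (0 : Fin (2 ^ a)) (U * V) (A * B) 1 (δ + ε + 2 * Real.sqrt (δ * ε)) := by
  haveI : Nonempty (Fin (2 ^ s)) := ⟨⟨0, Nat.pow_pos (n := s) (by norm_num)⟩⟩
  obtain ⟨hU1, hU2⟩ := hU
  obtain ⟨hV1, hV2⟩ := hV
  simp only [Complex.ofReal_one, one_smul, opNorm_eq_l2] at hU2 hV2 ⊢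
  refine ⟨mul_mem hU1 hV1, ?_⟩
  simp only [Complex.ofReal_one, one_smul, opNorm_eq_l2]
  exact key_bound 0 U V A B hA hB hU1 hV1 hU2 hV2
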